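/- For every b ∈ (0,π), the difference ξ(b,z) + (1/π²)·ln√(1−z)·sin²(b) remains bounded as z → 1−; consequently ξ(b,z) → +∞ as z → 1−. -/
import Mathlib


open Real Filter Topology Asymptotics

/-- The digamma function `ψ = Γ'/Γ`. -/
noncomputable def digamma (x : ℝ) : ℝ := deriv Real.Gamma x / Real.Gamma x

/-- The regularized Green's function `ξ(b,z)` of a point interaction at height
`b ∈ (0,π)` in the Dirichlet layer `ℝ²×(0,π)`, for energies `z < 1`:
`ξ(b,z) = −(1/π²) Σ_{n≥1} ln√(1 − z/n²)·sin²(n b)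
          + (1/(4π²))·[γ + ψ(b/π) + (π/2)·cot b]`. -/
noncomputable def xiLayer (b z : ℝ) : ℝ :=
  -(1 / π ^ 2) *
      ∑' n : ℕ, Real.log (Real.sqrt (1 - z / ((n : ℝ) + 1) ^ 2)) * Real.sin (((n : ℝ) + 1) * b) ^ 2
    + (1 / (4 * π ^ 2)) *
      (Real.eulerMascheroniConstant + digamma (b / π) + (π / 2) * Real.cot b)

noncomputable def gfun (b z : ℝ) (n : ℕ) : ℝ :=
  Real.log (Real.sqrt (1 - z / ((n : ℝ) + 1) ^ 2)) * Real.sin (((n : ℝ) + 1) * b) ^ 2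

lemma tail_bound (b : ℝ) {z : ℝ} (hz0 : 0 ≤ z) (hz1 : z < 1) (n : ℕ) :
    |gfun b z (n + 1)| ≤ (2/3) * (1 / ((n : ℝ) + 2) ^ 2) := by
  have hm : (2:ℝ) ≤ (n : ℝ) + 2 := by
    have := Nat.cast_nonneg (α := ℝ) n; linarith
  have hm2 : (4:ℝ) ≤ ((n : ℝ) + 2) ^ 2 := by nlinarith
  set x : ℝ := z / ((n : ℝ) + 2) ^ 2 with hx
  have hx0 : 0 ≤ x := by positivity
  have hx4 : x ≤ 1/4 := by
    rw [hx, div_le_iff₀ (by positivity)]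
    nlinarith
  have h1x : (3:ℝ)/4 ≤ 1 - x := by linarith
  have h1xpos : (0:ℝ) < 1 - x := by linarith
  have hlog : Real.log (Real.sqrt (1 - x)) = (1/2) * Real.log (1 - x) := by
    rw [Real.log_sqrt h1xpos.le]; ring
  have hloglb : -((4/3) * x) ≤ Real.log (1 - x) := by
    have h := Real.log_le_sub_one_of_pos (inv_pos.mpr h1xpos)
    rw [Real.log_inv] at h
    have hinv : (1 - x)⁻¹ ≤ (4/3)*x + 1 := by
      rw [inv_eq_one_div, div_le_iff₀ h1xpos]; nlinarith
    linarith
  have hlogub : Real.log (1 - x) ≤ 0 := Real.log_nonpos (by linarith) (by linarith)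
  have hsin : Real.sin ((((n+1 : ℕ) : ℝ) + 1) * b) ^ 2 ≤ 1 := by
    have := Real.neg_one_le_sin ((((n+1 : ℕ) : ℝ) + 1) * b)
    have := Real.sin_le_one ((((n+1 : ℕ) : ℝ) + 1) * b)
    nlinarith
  have heq : gfun b z (n + 1)
      = (1/2) * Real.log (1 - x) * Real.sin ((((n+1 : ℕ) : ℝ) + 1) * b) ^ 2 := by
    unfold gfun
    rw [show (((n+1 : ℕ) : ℝ) + 1) = (n : ℝ) + 2 by push_cast; ring, ← hx, hlog]
  rw [heq, abs_mul, abs_of_nonneg (sq_nonneg (Real.sin ((((n+1 : ℕ) : ℝ) + 1) * b)))]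
  have h1 : |(1/2) * Real.log (1 - x)| ≤ (2/3) * x := by
    rw [abs_mul]
    rw [abs_of_nonneg (by norm_num : (0:ℝ) ≤ 1/2), abs_of_nonpos hlogub]
    linarith
  have hxle : x ≤ 1 / ((n:ℝ) + 2) ^ 2 := by
    rw [hx]; gcongr <;> linarith
  calc |(1/2) * Real.log (1 - x)| * Real.sin ((((n+1 : ℕ) : ℝ) + 1) * b) ^ 2
      ≤ |(1/2) * Real.log (1 - x)| * 1 := by gcongr <;> simp [Real.sin_sq_le_one]
    _ = |(1/2) * Real.log (1 - x)| := mul_one _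
    _ ≤ (2/3) * x := h1
    _ ≤ (2/3) * (1 / ((n:ℝ) + 2) ^ 2) := by linarith

lemma bound_summable : Summable (fun n : ℕ => (2/3 : ℝ) * (1 / ((n : ℝ) + 2) ^ 2)) := by
  apply Summable.mul_left
  have h : Summable (fun n : ℕ => 1 / (n : ℝ) ^ 2) :=
    Real.summable_one_div_nat_pow.mpr one_lt_two
  have h2 := (summable_nat_add_iff 2).mpr h
  apply h2.congr
  intro n
  push_cast
  ring

lemma tail_summable_abs (b : ℝ) {z : ℝ} (hz0 : 0 ≤ z) (hz1 : z < 1) :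
    Summable (fun n => |gfun b z (n + 1)|) :=
  Summable.of_nonneg_of_le (fun _ => abs_nonneg _) (tail_bound b hz0 hz1) bound_summable

lemma tail_summable (b : ℝ) {z : ℝ} (hz0 : 0 ≤ z) (hz1 : z < 1) :
    Summable (fun n => gfun b z (n + 1)) :=
  (tail_summable_abs b hz0 hz1).of_abs

lemma tail_le (b : ℝ) {z : ℝ} (hz0 : 0 ≤ z) (hz1 : z < 1) :
    |∑' n, gfun b z (n + 1)| ≤ ∑' n : ℕ, (2/3 : ℝ) * (1 / ((n : ℝ) + 2) ^ 2) := by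
  calc |∑' n, gfun b z (n + 1)| ≤ ∑' n, |gfun b z (n + 1)| := by
        have h := norm_tsum_le_tsum_norm (f := fun n => gfun b z (n + 1))
          (by simpa only [Real.norm_eq_abs] using tail_summable_abs b hz0 hz1)
        simpa only [Real.norm_eq_abs] using h
    _ ≤ ∑' n : ℕ, (2/3 : ℝ) * (1 / ((n : ℝ) + 2) ^ 2) :=
        Summable.tsum_le_tsum (tail_bound b hz0 hz1) (tail_summable_abs b hz0 hz1) bound_summable

lemma xi_repr (b : ℝ) {z : ℝ} (hz0 : 0 ≤ z) (hz1 : z < 1) :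
    xiLayer b z + (1 / π ^ 2) * Real.log (Real.sqrt (1 - z)) * Real.sin b ^ 2
      = -(1 / π ^ 2) * (∑' n, gfun b z (n + 1))
        + (1 / (4 * π ^ 2)) *
          (Real.eulerMascheroniConstant + digamma (b / π) + (π / 2) * Real.cot b) := by
  have hsum : Summable (gfun b z) := (summable_nat_add_iff 1).mp (tail_summable b hz0 hz1)
  have h0 : ∑' n, gfun b z n = gfun b z 0 + ∑' n, gfun b z (n + 1) := Summable.tsum_eq_zero_add hsum
  have hg0 : gfun b z 0 = Real.log (Real.sqrt (1 - z)) * Real.sin b ^ 2 := by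
    unfold gfun; norm_num
  unfold xiLayer
  rw [show (∑' n : ℕ, Real.log (Real.sqrt (1 - z / ((n : ℝ) + 1) ^ 2)) *
      Real.sin (((n : ℝ) + 1) * b) ^ 2) = ∑' n, gfun b z n from rfl, h0, hg0]
  ring

/-- For every `b ∈ (0,π)`, the difference `ξ(b,z) + (1/π²)·ln√(1−z)·sin²(b)` remains
bounded as `z → 1−`; consequently `ξ(b,z) → +∞` as `z → 1−`. -/
theorem xiLayer_threshold_asymptotics (b : ℝ) (hb0 : 0 < b) (hbπ : b < π) :
    (∃ C : ℝ, ∀ᶠ z in 𝓝[<] (1 : ℝ),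
        |xiLayer b z + (1 / π ^ 2) * Real.log (Real.sqrt (1 - z)) * Real.sin b ^ 2| ≤ C) ∧
    Tendsto (xiLayer b) (𝓝[<] (1 : ℝ)) atTop := by

  have hπ : (0:ℝ) < π := Real.pi_pos
  set K : ℝ := (1 / (4 * π ^ 2)) *
      (Real.eulerMascheroniConstant + digamma (b / π) + (π / 2) * Real.cot b) with hK
  set B : ℝ := ∑' n : ℕ, (2/3 : ℝ) * (1 / ((n : ℝ) + 2) ^ 2) with hB
  set C : ℝ := (1 / π ^ 2) * B + |K| with hC
  have hmem : Set.Ioo (0:ℝ) 1 ∈ 𝓝[<] (1:ℝ) :=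
    Ioo_mem_nhdsLT_of_mem (by constructor <;> norm_num)
  have hbound : ∀ᶠ z in 𝓝[<] (1 : ℝ),
      |xiLayer b z + (1 / π ^ 2) * Real.log (Real.sqrt (1 - z)) * Real.sin b ^ 2| ≤ C := by
    filter_upwards [hmem] with z hz
    obtain ⟨hz0, hz1⟩ := hz
    rw [xi_repr b hz0.le hz1]
    have hT := tail_le b hz0.le hz1
    calc |-(1 / π ^ 2) * (∑' n, gfun b z (n + 1)) + K|
        ≤ |-(1 / π ^ 2) * (∑' n, gfun b z (n + 1))| + |K| := abs_add_le _ _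
      _ = (1 / π ^ 2) * |∑' n, gfun b z (n + 1)| + |K| := by
          rw [abs_mul, abs_neg, abs_of_nonneg (by positivity : (0:ℝ) ≤ 1 / π ^ 2)]
      _ ≤ (1 / π ^ 2) * B + |K| := by
          have : (0:ℝ) < 1 / π ^ 2 := by positivity
          nlinarith
  refine ⟨⟨C, hbound⟩, ?_⟩
  -- second part
  have hsin : 0 < Real.sin b := Real.sin_pos_of_pos_of_lt_pi hb0 hbπ
  have hc : (0:ℝ) < (1 / π ^ 2) * Real.sin b ^ 2 := by positivity
  have h1 : Tendsto (fun z : ℝ => 1 - z) (𝓝[<] 1) (𝓝[>] (0:ℝ)) := by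
    apply tendsto_nhdsWithin_of_tendsto_nhds_of_eventually_within
    · have : Tendsto (fun z : ℝ => 1 - z) (𝓝 (1:ℝ)) (𝓝 (1 - 1 : ℝ)) :=
        (continuous_const.sub continuous_id).continuousAt
      simpa using this.mono_left nhdsWithin_le_nhds
    · filter_upwards [self_mem_nhdsWithin] with z hz
      simp only [Set.mem_Iio] at hz
      simp only [Set.mem_Ioi]; linarith
  have hlog : Tendsto (fun z : ℝ => Real.log (1 - z)) (𝓝[<] 1) atBot :=
    Real.tendsto_log_nhdsGT_zero.comp h1
  have hlogs : Tendsto (fun z : ℝ => Real.log (Real.sqrt (1 - z))) (𝓝[<] 1) atBot := by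
    have heq : ∀ᶠ z in 𝓝[<] (1:ℝ), (1/2) * Real.log (1 - z)
        = Real.log (Real.sqrt (1 - z)) := by
      filter_upwards [self_mem_nhdsWithin] with z hz
      simp only [Set.mem_Iio] at hz
      rw [Real.log_sqrt (by linarith)]; ring
    exact Tendsto.congr' heq (hlog.const_mul_atBot (by norm_num : (0:ℝ) < 1/2))
  have hlow : Tendsto (fun z : ℝ =>
      -C - (1 / π ^ 2) * Real.sin b ^ 2 * Real.log (Real.sqrt (1 - z))) (𝓝[<] 1) atTop := by
    apply tendsto_atTop_add_const_left
    have := hlogs.const_mul_atBot hc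
    rw [tendsto_neg_atTop_iff.symm] at this
    · exact this.congr (fun z => by ring)
  apply tendsto_atTop_mono' _ _ hlow
  filter_upwards [hbound] with z hz
  have := abs_le.mp hz
  nlinarith [this.1]
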